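/- Comparison lemma (lower direction): With q, Q and p as in the previous statement, let (q̂(k))_{k≥1} be a sequence of positive reals such that for all sufficiently large k, q̂(k) ≤ (1/(1 + ((1-p)/p)Q(k))) · ∑_{1 ≤ i < k/2} q(i)q̂(k-i). Then there exists c > 0 such that c·q̂(k) ≤ q(k) for all k ≥ 1. -/

import Mathlib

/-- Comparison lemma (lower direction): if `q̂` satisfies the inequation associated to the
recursion for `q` (with `≤`, dropping the nonnegative extra terms) for all sufficiently
large `k`, then `c·q̂(k) ≤ q(k)` for all `k ≥ 1`, for some constant `c > 0`. -/
theorem comparison_lower (p : ℝ) (hp : p ∈ Set.Ioo (0 : ℝ) 1)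
    (q Q qhat : ℕ → ℝ)
    (hq : ∀ k, 1 ≤ k → 0 < q k) (hsum : Summable q)
    (hQ : ∀ k, Q k = ∑' i : ℕ, if k ≤ i then q i else 0)
    (hQ1 : ∀ k, Q k ≤ 1)
    (hrec : ∀ k, 2 ≤ k → q k = (1 / (1 + ((1 - p) / p) * Q k)) *
      (∑ i ∈ Finset.Icc 1 ((k - 1) / 2), q i * q (k - i)
        + ((1 - p) / (2 * p)) * (q k) ^ 2
        + (if Even k then (1 / 2) * (q (k / 2)) ^ 2 else 0)))
    (hqhat : ∀ k, 1 ≤ k → 0 < qhat k)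
    (hineq : ∃ k₀ : ℕ, ∀ k, k₀ ≤ k → qhat k ≤ (1 / (1 + ((1 - p) / p) * Q k)) *
      (∑ i ∈ Finset.Icc 1 ((k - 1) / 2), q i * qhat (k - i))) :
    ∃ c > 0, ∀ k, 1 ≤ k → c * qhat k ≤ q k := by
  obtain ⟨hp0, hp1⟩ := hp
  obtain ⟨k₀, hk₀⟩ := hineq
  set K := max k₀ 2 with hK
  have hK2 : 2 ≤ K := le_max_right _ _
  have hne : (Finset.Icc 1 (K - 1)).Nonempty := ⟨1, by simp; omega⟩
  set c := (Finset.Icc 1 (K - 1)).inf' hne (fun j => q j / qhat j) with hc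
  have hcpos : 0 < c := by
    rw [hc, Finset.lt_inf'_iff]
    intro j hj
    simp only [Finset.mem_Icc] at hj
    exact div_pos (hq j hj.1) (hqhat j hj.1)
  refine ⟨c, hcpos, ?_⟩
  have hQnn : ∀ k, 1 ≤ k → 0 ≤ Q k := by
    intro k hk
    rw [hQ k]
    apply tsum_nonneg
    intro i
    split
    · exact (hq i (by omega)).le
    · exact le_refl 0
  have hr : 0 ≤ (1 - p) / p := div_nonneg (by linarith) hp0.le
  have hFpos : ∀ k, 1 ≤ k → 0 < 1 / (1 + ((1 - p) / p) * Q k) := by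
    intro k hk
    have := hQnn k hk
    positivity
  intro k
  induction k using Nat.strong_induction_on with
  | _ k ih =>
    intro hk1
    by_cases hkK : k < K
    · have hle : c ≤ q k / qhat k :=
        Finset.inf'_le _ (by simp only [Finset.mem_Icc]; omega)
      have hq' := hqhat k hk1
      calc c * qhat k ≤ (q k / qhat k) * qhat k :=
            mul_le_mul_of_nonneg_right hle hq'.le
        _ = q k := by field_simp
    · push_neg at hkK
      have hk2 : 2 ≤ k := le_trans hK2 hkK
      have h1 := hk₀ k (le_trans (le_max_left _ _) hkK)
      have hF := hFpos k (by omega)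
      have hsumle : ∑ i ∈ Finset.Icc 1 ((k - 1) / 2), q i * (c * qhat (k - i)) ≤
          ∑ i ∈ Finset.Icc 1 ((k - 1) / 2), q i * q (k - i) := by
        apply Finset.sum_le_sum
        intro i hi
        simp only [Finset.mem_Icc] at hi
        have hki1 : 1 ≤ k - i := by omega
        have hkik : k - i < k := by omega
        have h2 := ih (k - i) hkik hki1
        exact mul_le_mul_of_nonneg_left h2 (hq i hi.1).le
      have step1 : c * qhat k ≤ (1 / (1 + ((1 - p) / p) * Q k)) *
          ∑ i ∈ Finset.Icc 1 ((k - 1) / 2), q i * (c * qhat (k - i)) := by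
        have := mul_le_mul_of_nonneg_left h1 hcpos.le
        calc c * qhat k ≤ c * ((1 / (1 + ((1 - p) / p) * Q k)) *
              ∑ i ∈ Finset.Icc 1 ((k - 1) / 2), q i * qhat (k - i)) := this
          _ = (1 / (1 + ((1 - p) / p) * Q k)) *
              ∑ i ∈ Finset.Icc 1 ((k - 1) / 2), q i * (c * qhat (k - i)) := by
            simp only [Finset.mul_sum]
            exact Finset.sum_congr rfl fun i _ => by ring
      have step2 : (1 / (1 + ((1 - p) / p) * Q k)) *
          ∑ i ∈ Finset.Icc 1 ((k - 1) / 2), q i * q (k - i) ≤ q k := by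
        rw [hrec k hk2]
        have hA : 0 ≤ ((1 - p) / (2 * p)) * (q k) ^ 2 := mul_nonneg (div_nonneg (by linarith) (by linarith)) (sq_nonneg _)
        have hB : 0 ≤ (if Even k then (1 / 2) * (q (k / 2)) ^ 2 else 0) := by
          split <;> positivity
        nlinarith [hF]
      calc c * qhat k ≤ _ := step1
        _ ≤ (1 / (1 + ((1 - p) / p) * Q k)) *
            ∑ i ∈ Finset.Icc 1 ((k - 1) / 2), q i * q (k - i) :=
          mul_le_mul_of_nonneg_left hsumle hF.le
        _ ≤ q k := step2
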